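/- arXiv:2105.00087 — 2 statements merged into one kernel-verified Lean document; each statement's English description precedes it below -/
import Mathlib

section
/- Let K be a Hausdorff topological field (multiplication and addition continuous), let N be a positive integer, and let X be an N×N matrix over K. Suppose (g_i) is a sequence of invertible N×N matrices over K and (λ_i) is a sequence in K converging to 0, and suppose that the sequence of rescaled conjugates λ_i · (g_i X g_i^{-1}) converges entrywise to a matrix Z. Then Z is nilpotent; in fact Z^N = 0. -/
open Filter Topology

section Aux

open Matrix Polynomial

/-- Evaluating a homogeneous polynomial at a scaled point. -/
lemma aux_eval_smul_of_isHomogeneous {σ R : Type*} [CommSemiring R]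
    {φ : MvPolynomial σ R} {n : ℕ} (hφ : φ.IsHomogeneous n) (c : R) (x : σ → R) :
    MvPolynomial.eval (fun i => c * x i) φ = c ^ n * MvPolynomial.eval x φ := by
  rw [MvPolynomial.eval_eq, MvPolynomial.eval_eq, Finset.mul_sum]
  refine Finset.sum_congr rfl fun d hd => ?_
  have hdeg : ∑ i ∈ d.support, d i = n := by
    have := hφ (MvPolynomial.mem_support_iff.mp hd)
    simpa [Finsupp.weight_apply, Finsupp.sum] using this
  calc MvPolynomial.coeff d φ * ∏ i ∈ d.support, (c * x i) ^ d i
      = MvPolynomial.coeff d φ *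
        ((∏ i ∈ d.support, c ^ d i) * ∏ i ∈ d.support, x i ^ d i) := by
        rw [← Finset.prod_mul_distrib]
        simp [mul_pow]
    _ = c ^ n * (MvPolynomial.coeff d φ * ∏ i ∈ d.support, x i ^ d i) := by
        rw [Finset.prod_pow_eq_pow_sum, hdeg]; ring

/-- The coefficients of the characteristic polynomial are continuous functions of the
matrix entries. -/
lemma aux_continuous_charpoly_coeff (K : Type*) [CommRing K] [TopologicalSpace K]
    [IsTopologicalRing K] (N k : ℕ) :
    Continuous fun M : Matrix (Fin N) (Fin N) K => M.charpoly.coeff k := by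
  have key : ∀ M : Matrix (Fin N) (Fin N) K,
      M.charpoly.coeff k =
        MvPolynomial.eval (fun p : Fin N × Fin N => M p.1 p.2)
          ((Matrix.charpoly.univ K (Fin N)).coeff k) := by
    intro M
    rw [show (MvPolynomial.eval fun p : Fin N × Fin N => M p.1 p.2)
        = MvPolynomial.eval₂Hom (RingHom.id K) (fun p : Fin N × Fin N => M p.1 p.2) from rfl]
    rw [Matrix.charpoly.univ_coeff_eval₂Hom]
    rfl
  simp only [key]
  exact (MvPolynomial.continuous_eval _).comp
    (continuous_pi fun p => (continuous_apply p.2).comp (continuous_apply p.1))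

/-- Conjugation by a unit does not change the characteristic polynomial. -/
lemma aux_charpoly_units_conj {R : Type*} [CommRing R] {n : Type*} [DecidableEq n] [Fintype n]
    (g : (Matrix n n R)ˣ) (M : Matrix n n R) :
    ((g : Matrix n n R) * M * ((g⁻¹ : (Matrix n n R)ˣ) : Matrix n n R)).charpoly
      = M.charpoly := by
  set f : Matrix n n R →+* Matrix n n R[X] := (C : R →+* R[X]).mapMatrix with hf
  set a : Matrix n n R := (g : Matrix n n R) with ha
  set b : Matrix n n R := ((g⁻¹ : (Matrix n n R)ˣ) : Matrix n n R) with hb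
  have hab : a * b = 1 := by rw [ha, hb, Units.mul_inv]
  have hgg : f a * f b = 1 := by rw [← _root_.map_mul f, hab, _root_.map_one f]
  have hscalar : ∀ A : Matrix n n R[X],
      Matrix.scalar n (X : R[X]) * A = A * Matrix.scalar n (X : R[X]) := by
    intro A
    rw [Matrix.scalar_commute (X : R[X]) (fun r => Commute.all _ r) A]
  have hconjmat : f a * charmatrix M * f b = charmatrix (a * M * b) := by
    calc f a * charmatrix M * f b
        = f a * Matrix.scalar n (X : R[X]) * f b - f a * f M * f b := by
          rw [charmatrix]
          rw [show (C : R →+* R[X]).mapMatrix M = f M from rfl]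
          rw [mul_sub, sub_mul]
      _ = Matrix.scalar n (X : R[X]) - f (a * M * b) := by
          rw [← hscalar (f a), mul_assoc, hgg, mul_one,
            ← _root_.map_mul f, ← _root_.map_mul f]
      _ = charmatrix (a * M * b) := rfl
  rw [Matrix.charpoly, Matrix.charpoly, ← hconjmat, Matrix.det_mul, Matrix.det_mul]
  have h1 : (f a).det * (f b).det = 1 := by rw [← Matrix.det_mul, hgg, Matrix.det_one]
  calc (f a).det * (charmatrix M).det * (f b).det
      = (charmatrix M).det * ((f a).det * (f b).det) := by ring
    _ = (charmatrix M).det := by rw [h1, mul_one]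

end Aux

/-- Over a Hausdorff topological field, if a sequence of rescaled conjugates
`λ_i • (g_i * X * g_i⁻¹)` (with `λ_i → 0` and `g_i` invertible) converges entrywise to a
matrix `Z`, then `Z` is nilpotent; in fact `Z ^ N = 0`. -/
theorem limit_of_rescaled_conjugates_nilpotent
    (K : Type*) [Field K] [TopologicalSpace K] [IsTopologicalRing K] [T2Space K]
    (N : ℕ) (hN : 0 < N) (X : Matrix (Fin N) (Fin N) K)
    (g : ℕ → (Matrix (Fin N) (Fin N) K)ˣ) (lam : ℕ → K)
    (hlam : Tendsto lam atTop (𝓝 0))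
    (Z : Matrix (Fin N) (Fin N) K)
    (hconv : Tendsto
      (fun i => lam i • ((g i : Matrix (Fin N) (Fin N) K) * X *
        ((g i)⁻¹ : (Matrix (Fin N) (Fin N) K)ˣ)))
      atTop (𝓝 Z)) :
    Z ^ N = 0 := by
  set A : ℕ → Matrix (Fin N) (Fin N) K :=
    fun i => lam i • ((g i : Matrix (Fin N) (Fin N) K) * X *
      ((g i)⁻¹ : (Matrix (Fin N) (Fin N) K)ˣ)) with hA
  -- coefficients of charpoly of A i
  have hcard : Fintype.card (Fin N) = N := Fintype.card_fin N
  have hcoeff : ∀ k, k < N → ∀ i, (A i).charpoly.coeff k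
      = lam i ^ (N - k) * X.charpoly.coeff k := by
    intro k hk i
    set B : Matrix (Fin N) (Fin N) K :=
      (g i : Matrix (Fin N) (Fin N) K) * X * ((g i)⁻¹ : (Matrix (Fin N) (Fin N) K)ˣ) with hB
    have hhom : ((Matrix.charpoly.univ K (Fin N)).coeff k).IsHomogeneous (N - k) := by
      have := Matrix.charpoly.univ_coeff_isHomogeneous (R := K) (Fin N) k (N - k)
        (by rw [hcard]; omega)
      exact this
    have key : ∀ M : Matrix (Fin N) (Fin N) K,
        M.charpoly.coeff k =
          MvPolynomial.eval (fun p : Fin N × Fin N => M p.1 p.2)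
            ((Matrix.charpoly.univ K (Fin N)).coeff k) := by
      intro M
      rw [show (MvPolynomial.eval fun p : Fin N × Fin N => M p.1 p.2)
          = MvPolynomial.eval₂Hom (RingHom.id K) (fun p : Fin N × Fin N => M p.1 p.2) from rfl]
      rw [Matrix.charpoly.univ_coeff_eval₂Hom]
      rfl
    have hsm : (A i).charpoly.coeff k = lam i ^ (N - k) * B.charpoly.coeff k := by
      rw [key (A i), key B]
      have : (fun p : Fin N × Fin N => (A i) p.1 p.2)
          = fun p : Fin N × Fin N => lam i * B p.1 p.2 := by
        funext p
        simp [hA, hB, Matrix.smul_apply]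
      rw [this]
      exact aux_eval_smul_of_isHomogeneous hhom (lam i) _
    rw [hsm, aux_charpoly_units_conj]
  -- coefficients of Z.charpoly vanish below N
  have hZcoeff : ∀ k, k < N → Z.charpoly.coeff k = 0 := by
    intro k hk
    have hcont := (aux_continuous_charpoly_coeff K N k).continuousAt (x := Z)
    have h1 : Tendsto (fun i => (A i).charpoly.coeff k) atTop (𝓝 (Z.charpoly.coeff k)) :=
      hcont.tendsto.comp hconv
    have h2 : Tendsto (fun i => (A i).charpoly.coeff k) atTop (𝓝 0) := by
      have hpow : Tendsto (fun i => lam i ^ (N - k)) atTop (𝓝 0) := by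
        have := hlam.pow (N - k)
        rwa [zero_pow (by omega : N - k ≠ 0)] at this
      have : Tendsto (fun i => lam i ^ (N - k) * X.charpoly.coeff k) atTop (𝓝 0) := by
        simpa using hpow.mul_const (X.charpoly.coeff k)
      refine this.congr fun i => (hcoeff k hk i).symm
    exact tendsto_nhds_unique h1 h2
  -- hence Z.charpoly = X^N
  have hmonic : Z.charpoly.Monic := Z.charpoly_monic
  have hdeg : Z.charpoly.natDegree = N := by
    rw [Z.charpoly_natDegree_eq_dim, hcard]
  have hXN : Z.charpoly = Polynomial.X ^ N := by
    ext m
    rcases lt_trichotomy m N with hm | hm | hm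
    · rw [hZcoeff m hm, Polynomial.coeff_X_pow]
      simp [Nat.ne_of_lt hm]
    · subst hm
      rw [Polynomial.coeff_X_pow]
      simp only [if_pos rfl]
      have := hmonic.coeff_natDegree
      rwa [hdeg] at this
    · rw [Polynomial.coeff_eq_zero_of_natDegree_lt (by omega), Polynomial.coeff_X_pow]
      simp [Nat.ne_of_gt hm]
  have := Z.aeval_self_charpoly
  rw [hXN] at this
  simpa using this
end

section
/- Let K be a field of characteristic different from 2, let 𝔤 be a Lie algebra over K, and let θ be a Lie algebra automorphism of 𝔤 with θ ∘ θ = id. Set 𝔥 := {x ∈ 𝔤 : θ(x) = x} and 𝔰 := {x ∈ 𝔤 : θ(x) = −x}. Let X ∈ 𝔰 and suppose that 𝔤 is the internal direct sum of the kernel and the range of ad(X) (as K-submodules). Then 𝔰 is the internal direct sum of 𝔰 ∩ ker(ad X) and (ad X)(𝔥); that is, 𝔰 = 𝔰_X ⊕ [𝔥, X], where 𝔰_X denotes the centralizer of X in 𝔰. -/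
/-- Let `θ` be an involutive automorphism of a Lie algebra `𝔤` over a field of
characteristic different from 2, with `𝔥` the `+1`-eigenspace and `𝔰` the `-1`-eigenspace.
If `𝔤` is the internal direct sum of the kernel and the range of `ad X` for some `X ∈ 𝔰`,
then `𝔰` is the internal direct sum of `𝔰 ∩ ker (ad X)` and `(ad X)(𝔥)`. -/
theorem symmetric_pair_tangent_decomposition
    (K : Type*) [Field K] (hchar : (2 : K) ≠ 0)
    (L : Type*) [LieRing L] [LieAlgebra K L]
    (θ : L →ₗ⁅K⁆ L) (hinv : ∀ x : L, θ (θ x) = x)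
    (X : L)
    (hX : X ∈ LinearMap.ker ((θ : L →ₗ[K] L) + LinearMap.id))
    (hker_range_inf :
      LinearMap.ker (LieAlgebra.ad K L X) ⊓ LinearMap.range (LieAlgebra.ad K L X) = ⊥)
    (hker_range_sup :
      LinearMap.ker (LieAlgebra.ad K L X) ⊔ LinearMap.range (LieAlgebra.ad K L X) = ⊤) :
    ((LinearMap.ker ((θ : L →ₗ[K] L) + LinearMap.id) ⊓ LinearMap.ker (LieAlgebra.ad K L X)) ⊓
        Submodule.map (LieAlgebra.ad K L X)
          (LinearMap.ker ((θ : L →ₗ[K] L) - LinearMap.id)) = ⊥) ∧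
    ((LinearMap.ker ((θ : L →ₗ[K] L) + LinearMap.id) ⊓ LinearMap.ker (LieAlgebra.ad K L X)) ⊔
        Submodule.map (LieAlgebra.ad K L X)
          (LinearMap.ker ((θ : L →ₗ[K] L) - LinearMap.id)) =
      LinearMap.ker ((θ : L →ₗ[K] L) + LinearMap.id)) := by
  have hθX : θ X = -X := by
    have h : θ X + X = 0 := by simpa using hX
    exact eq_neg_of_add_eq_zero_left h
  have hbrack : ∀ y : L, θ ⁅X, y⁆ = -⁅X, θ y⁆ := by
    intro y
    rw [LieHom.map_lie, hθX, neg_lie]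
  constructor
  · -- intersection is trivial
    rw [eq_bot_iff]
    intro v hv
    have hvker : v ∈ LinearMap.ker (LieAlgebra.ad K L X) := hv.1.2
    have hvrange : v ∈ LinearMap.range (LieAlgebra.ad K L X) := by
      obtain ⟨y, -, rfl⟩ := hv.2
      exact ⟨y, rfl⟩
    have : v ∈ LinearMap.ker (LieAlgebra.ad K L X) ⊓
        LinearMap.range (LieAlgebra.ad K L X) := ⟨hvker, hvrange⟩
    rw [hker_range_inf] at this
    exact this
  · apply le_antisymm
    · apply sup_le inf_le_left
      rintro v ⟨y, hy, rfl⟩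
      have hθy : θ y = y := by
        have : θ y - y = 0 := by simpa using hy
        exact sub_eq_zero.mp this
      have : θ (LieAlgebra.ad K L X y) + LieAlgebra.ad K L X y = 0 := by
        simp only [LieAlgebra.ad_apply, hbrack, hθy, neg_add_cancel]
      simpa using this
    · intro s hs
      have hθs : θ s = -s := by
        have h : θ s + s = 0 := by simpa using hs
        exact eq_neg_of_add_eq_zero_left h
      have hstop : s ∈ LinearMap.ker (LieAlgebra.ad K L X) ⊔
          LinearMap.range (LieAlgebra.ad K L X) := by rw [hker_range_sup]; trivial
      obtain ⟨k, hk, r, hr, hkr⟩ := Submodule.mem_sup.mp hstop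
      obtain ⟨y, rfl⟩ := hr
      have hkker : ⁅X, k⁆ = 0 := hk
      have hθk : ⁅X, θ k⁆ = 0 := by
        have := hbrack k
        rw [hkker, map_zero] at this
        exact (neg_eq_zero.mp this.symm)
      -- 2 • s = (k - θ k) + ⁅X, y + θ y⁆
      have key : s + s = (k - θ k) + ⁅X, y + θ y⁆ := by
        have h1 : s = k + ⁅X, y⁆ := hkr.symm
        have h2 : θ s = θ k - ⁅X, θ y⁆ := by
          rw [h1, map_add, hbrack]; abel
        have h3 : s = -θ k + ⁅X, θ y⁆ := by
          rw [← neg_neg s, ← hθs, h2]; abel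
        calc s + s = (k + ⁅X, y⁆) + (-θ k + ⁅X, θ y⁆) := by rw [← h1, ← h3]
          _ = (k - θ k) + (⁅X, y⁆ + ⁅X, θ y⁆) := by abel
          _ = (k - θ k) + ⁅X, y + θ y⁆ := by rw [lie_add]
      have hs_eq : s = (2:K)⁻¹ • (k - θ k) + ⁅X, (2:K)⁻¹ • (y + θ y)⁆ := by
        have : (2:K) • s = (k - θ k) + ⁅X, y + θ y⁆ := by
          rw [two_smul]; exact key
        calc s = (2:K)⁻¹ • ((2:K) • s) := by
              rw [smul_smul, inv_mul_cancel₀ hchar, one_smul]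
          _ = (2:K)⁻¹ • ((k - θ k) + ⁅X, y + θ y⁆) := by rw [this]
          _ = (2:K)⁻¹ • (k - θ k) + ⁅X, (2:K)⁻¹ • (y + θ y)⁆ := by
              rw [smul_add, lie_smul]
      rw [hs_eq]
      apply Submodule.add_mem_sup
      · constructor
        · apply Submodule.smul_mem
          have : θ (k - θ k) + (k - θ k) = 0 := by
            rw [map_sub, hinv]; abel
          simpa using this
        · apply Submodule.smul_mem
          have : ⁅X, k - θ k⁆ = 0 := by
            rw [lie_sub, hkker, hθk, sub_zero]
          simpa using this
      · refine Submodule.mem_map.mpr ⟨(2:K)⁻¹ • (y + θ y), Submodule.smul_mem _ _ ?_, ?_⟩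
        · have : θ (y + θ y) - (y + θ y) = 0 := by
            rw [map_add, hinv, add_comm, sub_self]
          simpa using this
        · simp [LieAlgebra.ad_apply]
end
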